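/- Let (S,*) be a nontrivial commutative adequate partial semigroup, let r be an idempotent in J(S), let (C_n)_{n=1}^∞ be a sequence of members of r, let k ∈ ℕ, and for each l ∈ {1,...,k} let (y_{l,n})_{n=1}^∞ be an adequate sequence in S. Then there exist a sequence (a_n)_{n=1}^∞ in S and a sequence (H_n)_{n=1}^∞ in P_f(ℕ) with max H_n < min H_{n+1} for each n, such that for all l ∈ {1,...,k} and all F ∈ P_f(ℕ) with m = min F, one has ∏_{n∈F} (a_n * ∏_{t∈H_n} y_{l,t}) ∈ C_m. -/

import Mathlib

/-- A partial semigroup: `mul` is partially defined (`none` = undefined), and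
associativity holds in the strong sense: either side is defined iff the other is,
and then they agree. -/
structure PartialSemigroup (S : Type*) where
  mul : S → S → Option S
  assoc : ∀ a b c : S,
    (mul a b).bind (fun x => mul x c) = (mul b c).bind (fun y => mul a y)

namespace PartialSemigroup

variable {S : Type*} (P : PartialSemigroup S)

/-- φ(a) = {t : a*t is defined}. -/
def phi (a : S) : Set S := {t | (P.mul a t).isSome}

/-- σ(H) = ⋂_{s ∈ H} φ(s). -/
def sigma (H : Set S) : Set S := ⋂ s ∈ H, P.phi s

/-- a⁻¹A = {t ∈ φ(a) : a*t ∈ A}. -/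
def invImg (a : S) (A : Set S) : Set S :=
  {t | ∃ v, P.mul a t = some v ∧ v ∈ A}

/-- An adequate partial semigroup: σ(H) ≠ ∅ for every finite nonempty H. -/
def Adequate : Prop :=
  ∀ H : Finset S, H.Nonempty → (P.sigma ↑H).Nonempty

/-- δS: ultrafilters containing every φ(x). -/
def mem_delta (q : Ultrafilter S) : Prop := ∀ x : S, P.phi x ∈ q

/-- Product of a nonempty list, associated to the left; `none` if empty or undefined. -/
def listProd : List S → Option S
  | [] => none
  | a :: l => l.foldl (fun acc b => acc.bind (fun x => P.mul x b)) (some a)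

/-- ∏_{t ∈ H} f(t) in increasing order of indices. -/
def finProd (f : ℕ → S) (H : Finset ℕ) : Option S :=
  P.listProd ((H.sort (· ≤ ·)).map f)

/-- Product of a list of partially defined elements. -/
def optProd : List (Option S) → Option S
  | [] => none
  | o :: l => l.foldl (fun acc b => acc.bind (fun x => b.bind (fun y => P.mul x y))) o

/-- An adequate sequence. -/
def AdequateSeq (f : ℕ → S) : Prop :=
  (∀ H : Finset ℕ, H.Nonempty → (P.finProd f H).isSome) ∧
  (∀ F : Finset S, F.Nonempty → ∃ m : ℕ,
    ∀ H : Finset ℕ, H.Nonempty → (∀ n ∈ H, m ≤ n) →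
      ∀ v, P.finProd f H = some v → v ∈ P.sigma ↑F)

/-- The interleaved product (∏_{i=1}^m a(i)*f(t(i)))*a(m+1). -/
def jProd {m : ℕ} (a : Fin (m + 1) → S) (t : Fin m → ℕ) (f : ℕ → S) : Option S :=
  P.listProd
    ((((List.finRange m).map (fun i => [a i.castSucc, f (t i)])).flatten) ++ [a (Fin.last m)])

/-- J-sets. -/
def IsJSet (A : Set S) : Prop :=
  ∀ F : Finset (ℕ → S), F.Nonempty → (∀ f ∈ F, P.AdequateSeq f) →
    ∀ L : Finset S, L.Nonempty →
      ∃ m : ℕ, 0 < m ∧ ∃ a : Fin (m + 1) → S, ∃ t : Fin m → ℕ, StrictMono t ∧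
        ∀ f ∈ F, ∃ v, P.jProd a t f = some v ∧ v ∈ A ∩ P.sigma ↑L

end PartialSemigroup

namespace PartialSemigroup
variable {S : Type*} (P : PartialSemigroup S)

/-- A syndetic subset of a partial semigroup. -/
def Syndetic (A : Set S) : Prop :=
  ∃ H : Finset S, H.Nonempty ∧ P.sigma ↑H ⊆ ⋃ t ∈ H, P.invImg t A

end PartialSemigroup

namespace PartialSemigroup
variable {S : Type*} (P : PartialSemigroup S)

/-- `I` is a (two-sided) ideal of `δS` (with respect to the operation `star`). -/
def IsIdeal (star : {q : Ultrafilter S // P.mem_delta q} → {q : Ultrafilter S // P.mem_delta q} →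
      {q : Ultrafilter S // P.mem_delta q})
    (I : Set {q : Ultrafilter S // P.mem_delta q}) : Prop :=
  I.Nonempty ∧ ∀ p ∈ I, ∀ q, star p q ∈ I ∧ star q p ∈ I

/-- `K` is the smallest (two-sided) ideal of `δS`. -/
def IsSmallestIdeal (star : {q : Ultrafilter S // P.mem_delta q} →
      {q : Ultrafilter S // P.mem_delta q} → {q : Ultrafilter S // P.mem_delta q})
    (K : Set {q : Ultrafilter S // P.mem_delta q}) : Prop :=
  P.IsIdeal star K ∧ ∀ I, P.IsIdeal star I → K ⊆ I

end PartialSemigroup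

namespace PartialSemigroup
variable {S : Type*} (P : PartialSemigroup S)

/-! ### auxiliary algebra -/

def gmul (x y : Option S) : Option S := x.bind fun a => y.bind fun b => P.mul a b

variable (hcomm : ∀ a b : S, P.mul a b = P.mul b a)

lemma gmul_none (x : Option S) : P.gmul x none = none := by
  cases x <;> rfl

lemma gmul_assoc (x y z : Option S) : P.gmul (P.gmul x y) z = P.gmul x (P.gmul y z) := by
  cases x with
  | none => rfl
  | some a => cases y with
    | none => rfl
    | some b => cases z with
      | none => simp only [gmul_none]
      | some c =>
        simp only [gmul, Option.bind_some]
        exact P.assoc a b c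

include hcomm in
lemma gmul_comm (x y : Option S) : P.gmul x y = P.gmul y x := by
  cases x with
  | none => cases y <;> rfl
  | some a => cases y with
    | none => rfl
    | some b => simpa [gmul] using hcomm a b

include hcomm in
lemma gmul_right_comm (x y z : Option S) :
    P.gmul (P.gmul x y) z = P.gmul (P.gmul x z) y := by
  rw [gmul_assoc, gmul_assoc, P.gmul_comm hcomm y z]

lemma optProd_cons (o : Option S) (l : List (Option S)) :
    P.optProd (o :: l) = l.foldl P.gmul o := rfl

lemma foldl_gmul (l : List (Option S)) (x y : Option S) :
    l.foldl P.gmul (P.gmul x y) = P.gmul x (l.foldl P.gmul y) := by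
  induction l generalizing y with
  | nil => rfl
  | cons a l ih => simp only [List.foldl_cons, gmul_assoc, ih]

lemma optProd_append (l₁ l₂ : List (Option S)) (h₁ : l₁ ≠ []) (h₂ : l₂ ≠ []) :
    P.optProd (l₁ ++ l₂) = P.gmul (P.optProd l₁) (P.optProd l₂) := by
  obtain ⟨o, t, rfl⟩ := List.exists_cons_of_ne_nil h₁
  obtain ⟨o₂, t₂, rfl⟩ := List.exists_cons_of_ne_nil h₂
  simp only [optProd_cons, List.cons_append, List.foldl_append, List.foldl_cons]
  rw [foldl_gmul]

/-- fold with adjoined identity -/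
def gfold (acc : Option (Option S)) (b : Option S) : Option (Option S) :=
  match acc with
  | none => some b
  | some x => some (P.gmul x b)

include hcomm in
lemma gfold_right_comm : RightCommutative P.gfold := by
  constructor
  intro b a₁ a₂
  cases b with
  | none => simp [gfold, P.gmul_comm hcomm a₁ a₂]
  | some x => simp [gfold, P.gmul_right_comm hcomm]

lemma gfold_some (l : List (Option S)) (x : Option S) :
    l.foldl P.gfold (some x) = some (l.foldl P.gmul x) := by
  induction l generalizing x with
  | nil => rfl
  | cons a l ih => simp only [List.foldl_cons, gfold, ih]

lemma optProd_eq_gfold (l : List (Option S)) :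
    some (P.optProd l) = l.foldl P.gfold none ∨ l = [] := by
  cases l with
  | nil => exact Or.inr rfl
  | cons o t =>
    left
    simp only [List.foldl_cons, gfold, optProd_cons, gfold_some]

include hcomm in
lemma optProd_perm {l₁ l₂ : List (Option S)} (h : l₁.Perm l₂) :
    P.optProd l₁ = P.optProd l₂ := by
  rcases P.optProd_eq_gfold l₁ with h₁ | rfl
  · rcases P.optProd_eq_gfold l₂ with h₂ | rfl
    · have := @List.Perm.foldl_eq _ _ P.gfold _ _ (P.gfold_right_comm hcomm) h none
      rw [← h₁, ← h₂] at this
      exact Option.some_injective _ this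
    · rw [List.Perm.eq_nil h]
  · rw [← List.Perm.eq_nil h.symm]

lemma listProd_eq_optProd (l : List S) : P.listProd l = P.optProd (l.map some) := by
  cases l with
  | nil => rfl
  | cons a t =>
    simp only [listProd, List.map_cons, optProd_cons, List.foldl_map]
    rfl


/-! ### list permutation lemmas -/

lemma flatten_pairs_perm {ι α : Type*} (l : List ι) (u v : ι → α) :
    ((l.map (fun i => [u i, v i])).flatten).Perm (l.map u ++ l.map v) := by
  induction l with
  | nil => simp
  | cons i l ih =>
    simp only [List.map_cons, List.flatten_cons, List.cons_append]
    refine ((ih.append_left [u i, v i]).trans ?_)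
    show (u i :: v i :: (l.map u ++ l.map v)).Perm _
    exact (List.Perm.cons (u i) (List.perm_middle (a := v i)).symm)

lemma jProd_list_perm {ι α : Type*} (l : List ι) (u v : ι → α) (c : α) :
    ((l.map (fun i => [u i, v i])).flatten ++ [c]).Perm ((l.map u ++ [c]) ++ l.map v) := by
  refine ((flatten_pairs_perm l u v).append_right [c]).trans ?_
  rw [List.append_assoc]
  refine ((List.perm_append_singleton c (l.map v)).append_left (l.map u)).trans ?_
  show (l.map u ++ ([c] ++ l.map v)).Perm _
  rw [← List.append_assoc]

include hcomm in
lemma jProd_eq_gmul {m : ℕ} (hm : 0 < m) (a : Fin (m + 1) → S) (t : Fin m → ℕ) (f : ℕ → S) :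
    P.jProd a t f =
      P.gmul (P.listProd ((List.finRange m).map (fun i => a i.castSucc) ++ [a (Fin.last m)]))
        (P.listProd ((List.finRange m).map (fun i => f (t i)))) := by
  rw [jProd, listProd_eq_optProd,
    P.optProd_perm hcomm ((jProd_list_perm (List.finRange m) _ _ _).map some),
    List.map_append, P.optProd_append, ← listProd_eq_optProd, ← listProd_eq_optProd]
  · simp
  · intro h
    rw [List.map_eq_nil_iff, List.map_eq_nil_iff, List.finRange_eq_nil_iff] at h
    exact hm.ne' h

/-! ### sort lemmas -/

lemma sorted_toFinset_sort (l : List ℕ) (hl : l.Pairwise (· < ·)) :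
    l.toFinset.sort (· ≤ ·) = l :=
  (List.toFinset_sort (· ≤ ·) hl.nodup).mpr (hl.imp le_of_lt)

lemma finProd_toFinset (f : ℕ → S) (l : List ℕ) (hl : l.Pairwise (· < ·)) :
    P.finProd f l.toFinset = P.listProd (l.map f) := by
  rw [finProd, sorted_toFinset_sort l hl]

lemma sort_erase_max (F : Finset ℕ) (n : ℕ) (hn : n ∈ F) (hmax : ∀ x ∈ F, x ≤ n) :
    F.sort (· ≤ ·) = (F.erase n).sort (· ≤ ·) ++ [n] := by
  refine (fun hp hs => List.Perm.eq_of_pairwise' (F.pairwise_sort _) hs hp) ?_ ?_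
  · refine (Finset.sort_perm_toList F _).trans (List.Perm.trans ?_
      (((Finset.sort_perm_toList (F.erase n) _).symm.append_right [n])))
    refine List.Perm.trans ?_ (List.perm_append_singleton n _).symm
    rw [← Multiset.coe_eq_coe]
    simp only [Finset.toList, Multiset.coe_toList, ← Multiset.cons_coe, Finset.erase_val]
    exact (Multiset.cons_erase (show n ∈ F.val from hn)).symm
  · rw [List.pairwise_append]
    refine ⟨Finset.pairwise_sort _ _, List.pairwise_singleton _ n, ?_⟩
    intro a ha b hb
    rw [List.mem_singleton] at hb
    subst hb
    exact hmax a (Finset.mem_of_mem_erase ((Finset.mem_sort _).mp ha))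

lemma min'_erase_max (F : Finset ℕ) (n : ℕ) (hmax : ∀ x ∈ F, x ≤ n)
    (h' : (F.erase n).Nonempty) (hF : F.Nonempty) :
    F.min' hF = (F.erase n).min' h' := by
  obtain ⟨x, hx⟩ := h'
  have hxF := Finset.mem_of_mem_erase hx
  have hxn : x ≠ n := Finset.ne_of_mem_erase hx
  have h1 : F.min' hF ≤ x := Finset.min'_le _ _ hxF
  have h2 : F.min' hF ≠ n := by
    intro h
    rw [h] at h1
    exact hxn (le_antisymm (hmax x hxF) h1)
  refine le_antisymm (Finset.le_min' _ _ _ fun y hy => Finset.min'_le _ _ (Finset.mem_of_mem_erase hy))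
    (Finset.min'_le _ _ (Finset.mem_erase.mpr ⟨h2, F.min'_mem hF⟩))

/-! ### star set lemmas -/

variable (r : Ultrafilter S)

def starSet (A : Set S) : Set S := A ∩ {a | P.invImg a A ∈ r}

lemma invImg_inter (a : S) (A B : Set S) :
    P.invImg a (A ∩ B) = P.invImg a A ∩ P.invImg a B := by
  ext t
  constructor
  · rintro ⟨v, hv, hA, hB⟩
    exact ⟨⟨v, hv, hA⟩, ⟨v, hv, hB⟩⟩
  · rintro ⟨⟨v, hv, hA⟩, ⟨w, hw, hB⟩⟩
    rw [hv] at hw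
    exact ⟨v, hv, hA, (Option.some_injective _ hw) ▸ hB⟩

lemma starSet_mem (hidem : ∀ A : Set S, A ∈ r ↔ {a : S | P.invImg a A ∈ r} ∈ r)
    {A : Set S} (hA : A ∈ r) : P.starSet r A ∈ r :=
  r.toFilter.inter_mem hA ((hidem A).mp hA)

lemma invImg_starSet_mem (hrδ : P.mem_delta r)
    (hidem : ∀ A : Set S, A ∈ r ↔ {a : S | P.invImg a A ∈ r} ∈ r)
    {A : Set S} (hA : A ∈ r) {a : S} (ha : a ∈ P.starSet r A) :
    P.invImg a (P.starSet r A) ∈ r := by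
  have hinv : P.invImg a A ∈ r := ha.2
  have hst : {t : S | P.invImg t (P.invImg a A) ∈ r} ∈ r := (hidem _).mp hinv
  have hphi : P.phi a ∈ r := hrδ a
  have hsub : {t : S | P.invImg t (P.invImg a A) ∈ r} ∩ P.phi a ⊆
      P.invImg a {b : S | P.invImg b A ∈ r} := by
    rintro t ⟨ht, hφ⟩
    obtain ⟨w, hw⟩ := Option.isSome_iff_exists.mp hφ
    refine ⟨w, hw, ?_⟩
    refine r.toFilter.mem_of_superset ht ?_
    rintro u ⟨x, hx, z, hz, hzA⟩
    have := P.assoc a t u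
    rw [hw, hx] at this
    simp only [Option.bind_some] at this
    exact ⟨z, this.trans hz, hzA⟩
  have h2 : P.invImg a {b : S | P.invImg b A ∈ r} ∈ r :=
    r.toFilter.mem_of_superset (r.toFilter.inter_mem hst hphi) hsub
  rw [starSet, P.invImg_inter]
  exact r.toFilter.inter_mem hinv h2

/-! ### shifted adequate sequences -/

lemma sorted_map_add (l : List ℕ) (N : ℕ) (hl : l.Pairwise (· < ·)) :
    (l.map (· + N)).Pairwise (· < ·) :=
  List.Pairwise.map _ (fun _ _ h => Nat.add_lt_add_right h N) hl

lemma finProd_shift (f : ℕ → S) (N : ℕ) (H : Finset ℕ) :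
    P.finProd (fun s => f (s + N)) H
      = P.finProd f (((H.sort (· ≤ ·)).map (· + N)).toFinset) := by
  rw [P.finProd_toFinset f _ (sorted_map_add _ N (List.sortedLT_iff_pairwise.mp H.sortedLT_sort)), List.map_map]
  rfl

lemma shift_toFinset_nonempty (H : Finset ℕ) (hH : H.Nonempty) (N : ℕ) :
    (((H.sort (· ≤ ·)).map (· + N)).toFinset).Nonempty := by
  obtain ⟨b, hb⟩ := hH
  exact ⟨b + N, List.mem_toFinset.mpr (List.mem_map.mpr ⟨b, (Finset.mem_sort _).mpr hb, rfl⟩)⟩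

lemma adequateSeq_shift (f : ℕ → S) (hf : P.AdequateSeq f) (N : ℕ) :
    P.AdequateSeq (fun s => f (s + N)) := by
  constructor
  · intro H hH
    rw [finProd_shift]
    exact hf.1 _ (shift_toFinset_nonempty H hH N)
  · intro F hF
    obtain ⟨m, hm⟩ := hf.2 F hF
    refine ⟨m, fun H hH hge v hv => ?_⟩
    refine hm _ (shift_toFinset_nonempty H hH N) ?_ v (by rw [← finProd_shift]; exact hv)
    intro x hx
    obtain ⟨b, hb, rfl⟩ := List.mem_map.mp (List.mem_toFinset.mp hx)
    exact le_trans (hge b ((Finset.mem_sort _).mp hb)) (Nat.le_add_right b N)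

lemma le_foldr_max (l : List ℕ) : ∀ x ∈ l, x ≤ l.foldr max 0 := by
  induction l with
  | nil => simp
  | cons a l ih =>
    intro x hx
    rcases List.mem_cons.mp hx with rfl | hx
    · exact le_max_left _ _
    · exact le_trans (ih x hx) (le_max_right _ _)

lemma gmul_some (a : S) (x : Option S) :
    P.gmul (some a) x = x.bind (fun w => P.mul a w) := rfl

lemma optProd_singleton (o : Option S) : P.optProd [o] = o := rfl

/-! ### the history invariant -/

variable (C : ℕ → Set S) {k : ℕ} (y : Fin k → ℕ → S) (d : S)

def histProd (h : List (S × Finset ℕ)) (l : Fin k) (F : Finset ℕ) : Option S :=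
  P.optProd ((F.sort (· ≤ ·)).map (fun n =>
    (P.finProd (y l) ((h.getD n (d, ∅)).2)).bind (fun w => P.mul ((h.getD n (d, ∅)).1) w)))

def Inv (h : List (S × Finset ℕ)) : Prop :=
  (∀ i, i < h.length → ((h.getD i (d, ∅)).2).Nonempty) ∧
  (∀ i j, i < j → j < h.length →
     ∀ p ∈ (h.getD i (d, ∅)).2, ∀ q ∈ (h.getD j (d, ∅)).2, p < q) ∧
  (∀ l : Fin k, ∀ F : Finset ℕ, ∀ hF : F.Nonempty, (∀ z ∈ F, z < h.length) →
     ∃ v, histProd P y d h l F = some v ∧ v ∈ P.starSet r (C (F.min' hF)))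

lemma inv_nil : Inv P r C y d [] := by
  refine ⟨by simp, by simp, ?_⟩
  intro l F hF hlt
  obtain ⟨z, hz⟩ := hF
  exact absurd (hlt z hz) (by simp)

lemma extend (hcomm : ∀ a b : S, P.mul a b = P.mul b a)
    (hrδ : P.mem_delta r)
    (hrJ : ∀ A : Set S, A ∈ r → P.IsJSet A)
    (hidem : ∀ A : Set S, A ∈ r ↔ {a : S | P.invImg a A ∈ r} ∈ r)
    (hC : ∀ n, C n ∈ r) (hy : ∀ l, P.AdequateSeq (y l))
    (h : List (S × Finset ℕ)) (hInv : Inv P r C y d h) :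
    ∃ x, Inv P r C y d (h ++ [x]) := by
  classical
  set n := h.length with hn
  set B := ((List.range n).map (fun i => ((h.getD i (d, ∅)).2).sup id)).foldr max 0 with hBdef
  have hB : ∀ i, i < n → ∀ q ∈ (h.getD i (d, ∅)).2, q ≤ B := by
    intro i hi q hq
    refine le_trans (Finset.le_sup (f := id) hq) (le_foldr_max _ _ ?_)
    exact List.mem_map.mpr ⟨i, List.mem_range.mpr hi, rfl⟩
  set N := B + 1 with hNdef
  have hget_lt : ∀ (x : S × Finset ℕ) i, i < n → (h ++ [x]).getD i (d, ∅) = h.getD i (d, ∅) :=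
    fun x i hi => List.getD_append _ _ _ _ hi
  have hget_n : ∀ (x : S × Finset ℕ), (h ++ [x]).getD n (d, ∅) = x := by
    intro x
    rw [List.getD_append_right _ _ _ _ (le_refl n)]
    simp [hn]
  have hlen : ∀ (x : S × Finset ℕ), (h ++ [x]).length = n + 1 := by simp [hn]
  have hProd_eq : ∀ (x : S × Finset ℕ) (l : Fin k) (F : Finset ℕ), (∀ z ∈ F, z < n) →
      histProd P y d (h ++ [x]) l F = histProd P y d h l F := by
    intro x l F hF
    unfold histProd
    congr 1
    refine List.map_congr_left fun z hz => ?_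
    rw [hget_lt x z (hF z ((Finset.mem_sort _).mp hz))]
  rcases Nat.eq_zero_or_pos k with hk | hk
  · -- trivial case k = 0
    refine ⟨(d, {N}), ?_, ?_, ?_⟩
    · intro i hi
      rw [hlen] at hi
      rcases Nat.lt_succ_iff_lt_or_eq.mp hi with hi | rfl
      · rw [hget_lt _ i hi]; exact hInv.1 i hi
      · rw [hget_n]; exact ⟨N, Finset.mem_singleton_self N⟩
    · intro i j hij hj p hp q hq
      rw [hlen] at hj
      rcases Nat.lt_succ_iff_lt_or_eq.mp hj with hj | rfl
      · rw [hget_lt _ i (hij.trans hj)] at hp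
        rw [hget_lt _ j hj] at hq
        exact hInv.2.1 i j hij hj p hp q hq
      · rw [hget_lt _ i hij] at hp
        rw [hget_n] at hq
        have := hB i hij p hp
        have hqN : q = N := Finset.mem_singleton.mp hq
        omega
    · intro l
      exact absurd l.isLt (by omega)
  -- main case k > 0
  set invSet : Fin k → Finset ℕ → Set S := fun l F =>
    if hc : F.Nonempty ∧ ∀ z ∈ F, z < n then
      P.invImg (hInv.2.2 l F hc.1 hc.2).choose (P.starSet r (C (F.min' hc.1)))
    else Set.univ with hinvSetDef
  set A : Set S := P.starSet r (C n) ∩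
      ⋂ (l : Fin k), ⋂ F ∈ ((Finset.range n).powerset : Finset (Finset ℕ)), invSet l F with hAdef
  have hA : A ∈ r := by
    refine r.toFilter.inter_mem (P.starSet_mem r hidem (hC n)) ?_
    rw [Filter.iInter_mem]
    intro l
    rw [Filter.biInter_finset_mem]
    intro F hF
    by_cases hc : F.Nonempty ∧ ∀ z ∈ F, z < n
    · rw [hinvSetDef]
      simp only [dif_pos hc]
      exact P.invImg_starSet_mem r hrδ hidem (hC _) (hInv.2.2 l F hc.1 hc.2).choose_spec.2
    · rw [hinvSetDef]
      simp only [dif_neg hc]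
      exact Filter.univ_mem
  have hJ : P.IsJSet A := hrJ A hA
  letI := Classical.decEq (ℕ → S)
  obtain ⟨m, hm, a, t, ht, hjp⟩ := hJ
    ((Finset.univ : Finset (Fin k)).image (fun l s => y l (s + N)))
    (Finset.Nonempty.image ⟨⟨0, hk⟩, Finset.mem_univ _⟩ _)
    (by
      intro f hf
      obtain ⟨l, _, rfl⟩ := Finset.mem_image.mp hf
      exact P.adequateSeq_shift (y l) (hy l) N)
    {d} (Finset.singleton_nonempty d)
  have hv : ∀ l : Fin k, ∃ v, P.jProd a t (fun s => y l (s + N)) = some v ∧ v ∈ A ∩ P.sigma ↑({d} : Finset S) :=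
    fun l => hjp _ (Finset.mem_image.mpr ⟨l, Finset.mem_univ _, rfl⟩)
  choose v hv1 hv2 using hv
  set tl : List ℕ := (List.finRange m).map (fun i => t i + N) with htldef
  have htl_sorted : tl.Pairwise (· < ·) := by
    refine List.Pairwise.map _ (fun i j hij => ?_) (List.pairwise_lt_finRange m)
    have := ht hij
    omega
  set Hs : Finset ℕ := tl.toFinset with hHsdef
  have htl_ne : tl ≠ [] := by
    rw [htldef]
    simp only [ne_eq, List.map_eq_nil_iff, List.finRange_eq_nil_iff]
    omega
  have hHsmem : ∀ q ∈ Hs, N ≤ q := by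
    intro q hq
    obtain ⟨i, _, rfl⟩ := List.mem_map.mp (List.mem_toFinset.mp hq)
    omega
  have hHs_ne : Hs.Nonempty := by
    obtain ⟨q, t', heq⟩ := List.exists_cons_of_ne_nil htl_ne
    exact ⟨q, List.mem_toFinset.mpr (heq ▸ List.mem_cons_self (a := q) (l := t'))⟩
  set As : List S := (List.finRange m).map (fun i => a i.castSucc) ++ [a (Fin.last m)] with hAsdef
  have hgm : ∀ l : Fin k, P.gmul (P.listProd As) (P.finProd (y l) Hs) = some (v l) := by
    intro l
    rw [hHsdef, P.finProd_toFinset _ _ htl_sorted, htldef, List.map_map]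
    rw [← hv1 l, P.jProd_eq_gmul hcomm hm a t]
    rfl
  obtain ⟨α, hα⟩ : ∃ α, P.listProd As = some α := by
    cases hcase : P.listProd As with
    | none =>
      have := hgm ⟨0, hk⟩
      rw [hcase] at this
      simp [gmul] at this
    | some α => exact ⟨α, rfl⟩
  have hkey : ∀ l : Fin k, (P.finProd (y l) Hs).bind (fun w => P.mul α w) = some (v l) := by
    intro l
    have := hgm l
    rw [hα] at this
    rw [← P.gmul_some]
    exact this
  refine ⟨(α, Hs), ?_, ?_, ?_⟩
  · intro i hi
    rw [hlen] at hi
    rcases Nat.lt_succ_iff_lt_or_eq.mp hi with hi | rfl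
    · rw [hget_lt _ i hi]; exact hInv.1 i hi
    · rw [hget_n]; exact hHs_ne
  · intro i j hij hj p hp q hq
    rw [hlen] at hj
    rcases Nat.lt_succ_iff_lt_or_eq.mp hj with hj | rfl
    · rw [hget_lt _ i (hij.trans hj)] at hp
      rw [hget_lt _ j hj] at hq
      exact hInv.2.1 i j hij hj p hp q hq
    · rw [hget_lt _ i hij] at hp
      rw [hget_n] at hq
      have h1 := hB i hij p hp
      have h2 := hHsmem q hq
      omega
  · intro l F hF hlt
    rw [hlen] at hlt
    by_cases hnF : n ∈ F
    · have hmax : ∀ z ∈ F, z ≤ n := fun z hz => Nat.lt_succ_iff.mp (hlt z hz)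
      set F' := F.erase n with hF'def
      have hsort : F.sort (· ≤ ·) = F'.sort (· ≤ ·) ++ [n] := sort_erase_max F n hnF hmax
      by_cases hF' : F'.Nonempty
      · have hlt' : ∀ z ∈ F', z < n := fun z hz =>
          lt_of_le_of_ne (hmax z (Finset.mem_of_mem_erase hz)) (Finset.ne_of_mem_erase hz)
        have hzspec := (hInv.2.2 l F' hF' hlt').choose_spec
        set z := (hInv.2.2 l F' hF' hlt').choose with hzdef
        have hvA : v l ∈ A := (hv2 l).1
        have hvinv : v l ∈ invSet l F' := by
          have h2 := hvA.2
          simp only [Set.mem_iInter] at h2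
          exact h2 l F' (Finset.mem_powerset.mpr fun w hw => Finset.mem_range.mpr (hlt' w hw))
        rw [hinvSetDef] at hvinv
        simp only [dif_pos (And.intro hF' hlt')] at hvinv
        obtain ⟨u, hu1, hu2⟩ := hvinv
        refine ⟨u, ?_, ?_⟩
        · show P.optProd _ = some u
          rw [hsort, List.map_append, P.optProd_append]
          · have hfirst : ((F'.sort (· ≤ ·)).map (fun z =>
                (P.finProd (y l) (((h ++ [(α, Hs)]).getD z (d, ∅)).2)).bind
                  (fun w => P.mul (((h ++ [(α, Hs)]).getD z (d, ∅)).1) w)))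
                = ((F'.sort (· ≤ ·)).map (fun z =>
                (P.finProd (y l) ((h.getD z (d, ∅)).2)).bind
                  (fun w => P.mul ((h.getD z (d, ∅)).1) w))) := by
              refine List.map_congr_left fun w hw => ?_
              rw [hget_lt _ w (hlt' w ((Finset.mem_sort _).mp hw))]
            rw [hfirst]
            have h1 : P.optProd ((F'.sort (· ≤ ·)).map (fun z =>
                (P.finProd (y l) ((h.getD z (d, ∅)).2)).bind
                  (fun w => P.mul ((h.getD z (d, ∅)).1) w))) = some z := hzspec.1
            rw [h1]
            simp only [List.map_cons, List.map_nil, hget_n]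
            rw [P.optProd_singleton, hkey l]
            simpa [gmul] using hu1
          · simp only [ne_eq, List.map_eq_nil_iff]
            intro hcon
            obtain ⟨w, hw⟩ := hF'
            exact (List.ne_nil_of_mem ((Finset.mem_sort (· ≤ ·)).mpr hw)) hcon
          · simp
        · have hmin : F.min' hF = F'.min' hF' := min'_erase_max F n hmax hF' hF
          rw [hmin]
          exact hu2
      · -- F = {n}
        have hFeq : F = {n} := by
          have hem := Finset.not_nonempty_iff_eq_empty.mp hF'
          ext w
          simp only [Finset.mem_singleton]
          constructor
          · intro hw
            by_contra hne
            exact (Finset.notMem_empty w) (hem ▸ Finset.mem_erase.mpr ⟨hne, hw⟩)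
          · rintro rfl; exact hnF
        subst hFeq
        refine ⟨v l, ?_, ?_⟩
        · show P.optProd _ = some (v l)
          rw [Finset.sort_singleton]
          simp only [List.map_cons, List.map_nil, hget_n]
          rw [P.optProd_singleton]
          exact hkey l
        · simp only [Finset.min'_singleton]
          exact (hv2 l).1.1
    · have hlt' : ∀ z ∈ F, z < n := fun z hz =>
        lt_of_le_of_ne (Nat.lt_succ_iff.mp (hlt z hz)) (fun hc => hnF (hc ▸ hz))
      rw [hProd_eq _ l F hlt']
      exact hInv.2.2 l F hF hlt'

variable (hcomm : ∀ a b : S, P.mul a b = P.mul b a)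
  (hrδ : P.mem_delta r)
  (hrJ : ∀ A : Set S, A ∈ r → P.IsJSet A)
  (hidem : ∀ A : Set S, A ∈ r ↔ {a : S | P.invImg a A ∈ r} ∈ r)
  (hC : ∀ n, C n ∈ r) (hy : ∀ l, P.AdequateSeq (y l))

noncomputable def hist :
    ∀ n : ℕ, {h : List (S × Finset ℕ) // Inv P r C y d h ∧ h.length = n}
  | 0 => ⟨[], P.inv_nil r C y d, rfl⟩
  | n + 1 =>
    let p := hist n
    ⟨p.1 ++ [(P.extend r C y d hcomm hrδ hrJ hidem hC hy p.1 p.2.1).choose],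
      (P.extend r C y d hcomm hrδ hrJ hidem hC hy p.1 p.2.1).choose_spec,
      by simp [p.2.2]⟩

lemma hist_getD_mono :
    ∀ n n' : ℕ, n ≤ n' → ∀ z < n,
      ((P.hist r C y d hcomm hrδ hrJ hidem hC hy n').1.getD z (d, ∅))
        = ((P.hist r C y d hcomm hrδ hrJ hidem hC hy n).1.getD z (d, ∅)) := by
  intro n n' hn
  induction n' with
  | zero =>
    intro z hz
    omega
  | succ n' ih =>
    intro z hz
    rcases Nat.lt_succ_iff_lt_or_eq.mp (Nat.lt_succ_of_le hn) with hlt | rfl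
    · have hle : n ≤ n' := Nat.lt_succ_iff.mp hlt
      rw [← ih hle z hz]
      show ((P.hist r C y d hcomm hrδ hrJ hidem hC hy n').1 ++ [_]).getD z (d, ∅) = _
      rw [List.getD_append]
      rw [(P.hist r C y d hcomm hrδ hrJ hidem hC hy n').2.2]
      omega
    · rfl

end PartialSemigroup

open PartialSemigroup in
/-- Corollary: Phulara-type central sets theorem for finitely many adequate
sequences in a nontrivial commutative adequate partial semigroup. -/
theorem stmt14 {S : Type*} (P : PartialSemigroup S) (hP : P.Adequate)
    (hcomm : ∀ a b : S, P.mul a b = P.mul b a) (hS : Nontrivial S)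
    -- `r` is an idempotent in `J(S) ⊆ δS`:
    (r : Ultrafilter S) (hrδ : P.mem_delta r)
    (hrJ : ∀ A : Set S, A ∈ r → P.IsJSet A)
    (hidem : ∀ A : Set S, A ∈ r ↔ {a : S | P.invImg a A ∈ r} ∈ r)
    (C : ℕ → Set S) (hC : ∀ n, C n ∈ r)
    (k : ℕ) (y : Fin k → ℕ → S) (hy : ∀ l, P.AdequateSeq (y l)) :
    ∃ a : ℕ → S, ∃ H : ℕ → Finset ℕ,
      (∀ n, (H n).Nonempty) ∧
      (∀ n, ∀ i ∈ H n, ∀ j ∈ H (n + 1), i < j) ∧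
      ∀ (l : Fin k) (F : Finset ℕ) (hF : F.Nonempty),
        ∃ v, P.optProd ((F.sort (· ≤ ·)).map
              (fun n => (P.finProd (y l) (H n)).bind
                (fun w => P.mul (a n) w))) = some v ∧
          v ∈ C (F.min' hF) := by
  obtain ⟨d, -, -⟩ := hS.exists_pair_ne
  set hst := P.hist r C y d hcomm hrδ hrJ hidem hC hy with hstdef
  refine ⟨fun n => ((hst (n + 1)).1.getD n (d, ∅)).1,
    fun n => ((hst (n + 1)).1.getD n (d, ∅)).2, ?_, ?_, ?_⟩
  · intro n
    exact (hst (n + 1)).2.1.1 n (by rw [(hst (n + 1)).2.2]; omega)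
  · intro n i hi j hj
    have e1 := P.hist_getD_mono r C y d hcomm hrδ hrJ hidem hC hy (n + 1) (n + 2)
      (by omega) n (by omega)
    refine (hst (n + 2)).2.1.2.1 n (n + 1) (by omega) (by rw [(hst (n + 2)).2.2]; omega)
      i ?_ j hj
    rw [← hstdef] at e1
    rw [e1]
    exact hi
  · intro l F hF
    set M := F.max' hF + 1 with hM
    have hlt : ∀ z ∈ F, z < (hst M).1.length := by
      intro z hz
      rw [(hst M).2.2]
      have := F.le_max' z hz
      omega
    obtain ⟨v, hv1, hv2⟩ := (hst M).2.1.2.2 l F hF hlt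
    refine ⟨v, ?_, hv2.1⟩
    rw [← hv1]
    unfold histProd
    congr 1
    refine List.map_congr_left fun z hz => ?_
    have hzF : z ∈ F := (Finset.mem_sort _).mp hz
    have e := P.hist_getD_mono r C y d hcomm hrδ hrJ hidem hC hy (z + 1) M
      (by have := F.le_max' z hzF; omega) z (by omega)
    rw [← hstdef] at e
    rw [e]
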